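/- Let (p*, p⁺*, p⁻*, x*) be an optimal solution of the L-ESM subproblem and set X* = Σ_{m∈U} x_m*. Then for every prosumer m ∈ U at least one of the following four modes holds: (Mode 1) c_m(x_m* + D_m) + b_m − w⁰ + a·X* + a·x_m* = 0 and p_m* = x_m* + D_m; (Mode 2) w⁺ − w⁰ + a·X* + a·x_m* = 0 and p_m* = min(p̄_m, (w⁺ − b_m)/c_m); (Mode 3) w⁻ − w⁰ + a·X* + a·x_m* = 0 and p_m* = min(p̄_m, (w⁻ − b_m)/c_m); (Mode 4) x_m* = p̄_m − D_m and p_m* = p̄_m. -/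
import Mathlib


open Finset

variable {U : Type*} [Fintype U]

/-- A point `(p, p⁺, p⁻, x)` is feasible for the L-ESM subproblem:
power balance, generator bounds, and nonnegativity of grid trades. -/
def Feasible (D pbar : U → ℝ) (p pp pm x : U → ℝ) : Prop :=
  ∀ m : U, D m + x m + pm m = p m + pp m ∧
    0 ≤ p m ∧ p m ≤ pbar m ∧ 0 ≤ pp m ∧ 0 ≤ pm m

/-- Objective of the L-ESM subproblem at base price `w0`. -/
noncomputable def Objective (c b : U → ℝ) (wplus wminus a w0 : ℝ)
    (p pp pm x : U → ℝ) : ℝ :=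
  (∑ m : U, (c m / 2 * (p m) ^ 2 + b m * p m + wplus * pp m
      - wminus * pm m - w0 * x m))
    + a / 2 * ∑ m : U, (x m) ^ 2 + a / 2 * (∑ m : U, x m) ^ 2

/-- `(p, p⁺, p⁻, x)` is an optimal solution of the L-ESM subproblem. -/
noncomputable def IsOptimal (c b D pbar : U → ℝ) (wplus wminus a w0 : ℝ)
    (p pp pm x : U → ℝ) : Prop :=
  Feasible D pbar p pp pm x ∧
    ∀ q qp qm y : U → ℝ, Feasible D pbar q qp qm y →
      Objective c b wplus wminus a w0 p pp pm x ≤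
        Objective c b wplus wminus a w0 q qp qm y

set_option maxHeartbeats 4000000

/-- at any optimal solution of the L-ESM subproblem, every
prosumer operates in one of the four modes of Lemma 1. -/
theorem lesm_optimal_modes [Nonempty U]
    (c b D pbar : U → ℝ) (wplus wminus a w0 : ℝ)
    (hc : ∀ m, 0 < c m) (hpbar : ∀ m, 0 ≤ pbar m)
    (hb : ∀ m, 0 < b m) (hbw : ∀ m, b m < wminus)
    (hw : wminus < wplus) (ha : 0 < a)
    (p pp pm x : U → ℝ)
    (hopt : IsOptimal c b D pbar wplus wminus a w0 p pp pm x) :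
    ∀ m : U,
      (c m * (x m + D m) + b m - w0 + a * (∑ j : U, x j) + a * x m = 0 ∧
        p m = x m + D m) ∨
      (wplus - w0 + a * (∑ j : U, x j) + a * x m = 0 ∧
        p m = min (pbar m) ((wplus - b m) / c m)) ∨
      (wminus - w0 + a * (∑ j : U, x j) + a * x m = 0 ∧
        p m = min (pbar m) ((wminus - b m) / c m)) ∨
      (x m = pbar m - D m ∧ p m = pbar m) := by
  classical
  obtain ⟨hfeas, hmin⟩ := hopt
  intro m
  obtain ⟨hbal, hp0, hp1, hpp0, hpm0⟩ := hfeas m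
  have hcm := hc m
  obtain ⟨X, hX⟩ : ∃ v : ℝ, v = ∑ j : U, x j := ⟨_, rfl⟩
  obtain ⟨μ, hμ⟩ : ∃ v : ℝ, v = a * X + a * x m - w0 := ⟨_, rfl⟩
  -- Master variational inequality for single-prosumer perturbations
  have key : ∀ q qp qm : ℝ, 0 ≤ q → q ≤ pbar m → 0 ≤ qp → 0 ≤ qm →
      0 ≤ (c m * p m + b m) * (q - p m) + wplus * (qp - pp m)
        - wminus * (qm - pm m) + μ * ((q + qp - qm - D m) - x m) := by
    intro q qp qm hq0 hq1 hqp hqm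
    obtain ⟨y, hy⟩ : ∃ v : ℝ, v = q + qp - qm - D m := ⟨_, rfl⟩
    obtain ⟨B, hB⟩ : ∃ v : ℝ, v = (c m * p m + b m) * (q - p m) + wplus * (qp - pp m)
        - wminus * (qm - pm m) + μ * (y - x m) := ⟨_, rfl⟩
    obtain ⟨Cq, hCq⟩ : ∃ v : ℝ, v = c m / 2 * (q - p m) ^ 2 + a * (y - x m) ^ 2 := ⟨_, rfl⟩
    have hgoal : (c m * p m + b m) * (q - p m) + wplus * (qp - pp m)
        - wminus * (qm - pm m) + μ * ((q + qp - qm - D m) - x m) = B := by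
      rw [hB, hy]
    rw [hgoal]
    have hC0 : 0 ≤ Cq := by
      rw [hCq]; positivity
    have step : ∀ t : ℝ, 0 < t → t ≤ 1 → 0 ≤ B * t + Cq * t ^ 2 := by
      intro t ht0 ht1
      have ht0' := ht0.le
      obtain ⟨P, hP⟩ : ∃ v : U → ℝ, v = Function.update p m (p m + t * (q - p m)) := ⟨_, rfl⟩
      obtain ⟨PP2, hPP⟩ : ∃ v : U → ℝ, v = Function.update pp m (pp m + t * (qp - pp m)) :=
        ⟨_, rfl⟩
      obtain ⟨PM2, hPM⟩ : ∃ v : U → ℝ, v = Function.update pm m (pm m + t * (qm - pm m)) :=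
        ⟨_, rfl⟩
      obtain ⟨Y, hY⟩ : ∃ v : U → ℝ, v = Function.update x m (x m + t * (y - x m)) := ⟨_, rfl⟩
      have hfeas' : Feasible D pbar P PP2 PM2 Y := by
        intro j
        by_cases hj : j = m
        · subst hj
          simp only [hP, hPP, hPM, hY, Function.update_self]
          refine ⟨?_, ?_, ?_, ?_, ?_⟩
          · linear_combination (1 - t) * hbal + t * hy
          · nlinarith [mul_nonneg (by linarith : (0:ℝ) ≤ 1 - t) hp0,
              mul_nonneg ht0' hq0]
          · nlinarith [mul_nonneg (by linarith : (0:ℝ) ≤ 1 - t)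
              (by linarith : 0 ≤ pbar j - p j), mul_nonneg ht0' (by linarith : 0 ≤ pbar j - q)]
          · nlinarith [mul_nonneg (by linarith : (0:ℝ) ≤ 1 - t) hpp0,
              mul_nonneg ht0' hqp]
          · nlinarith [mul_nonneg (by linarith : (0:ℝ) ≤ 1 - t) hpm0,
              mul_nonneg ht0' hqm]
        · simp only [hP, hPP, hPM, hY, Function.update_of_ne hj]
          exact hfeas j
      have hobj := hmin P PP2 PM2 Y hfeas'
      have hsum_sub : ∀ f g : U → ℝ, (∀ j, j ≠ m → f j = g j) →
          ∑ j : U, f j = ∑ j : U, g j + (f m - g m) := by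
        intro f g h
        rw [← Finset.add_sum_erase univ f (mem_univ m),
            ← Finset.add_sum_erase univ g (mem_univ m),
            Finset.sum_congr rfl fun j hj => h j (Finset.ne_of_mem_erase hj)]
        ring
      have e1 := hsum_sub
        (fun j => c j / 2 * P j ^ 2 + b j * P j + wplus * PP2 j
          - wminus * PM2 j - w0 * Y j)
        (fun j => c j / 2 * p j ^ 2 + b j * p j + wplus * pp j
          - wminus * pm j - w0 * x j)
        (fun j hj => by simp only [hP, hPP, hPM, hY, Function.update_of_ne hj])
      have e2 := hsum_sub (fun j => Y j ^ 2) (fun j => x j ^ 2)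
        (fun j hj => by simp only [hY, Function.update_of_ne hj])
      have e3 := hsum_sub Y x (fun j hj => by simp only [hY, Function.update_of_ne hj])
      simp only [Objective] at hobj
      rw [e1, e2, e3] at hobj
      simp only [hP, hPP, hPM, hY, Function.update_self] at hobj
      rw [← hX] at hobj
      rw [hB, hCq, hμ]
      nlinarith [hobj]
    by_contra hcon
    push_neg at hcon
    have hC1 : (0:ℝ) < Cq + 1 := by linarith
    obtain ⟨t, ht⟩ : ∃ v : ℝ, v = min 1 (-B / (2 * (Cq + 1))) := ⟨_, rfl⟩
    have ht0 : 0 < t := ht ▸ lt_min one_pos (div_pos (by linarith) (by linarith))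
    have ht1 : t ≤ 1 := ht ▸ min_le_left _ _
    have h := step t ht0 ht1
    have htle : t ≤ -B / (2 * (Cq + 1)) := ht ▸ min_le_right _ _
    have h2' : t * (2 * (Cq + 1)) ≤ -B := by
      rw [le_div_iff₀ (by linarith)] at htle; linarith
    have hCt : Cq * t ≤ -B / 2 := by nlinarith [ht0.le]
    nlinarith [h, mul_le_mul_of_nonneg_right hCt ht0.le,
      mul_pos (neg_pos.mpr hcon) ht0]
  -- Basic consequences of the VI
  have h1 : 0 ≤ wplus + μ := by
    have h := key (p m) (pp m + 1) (pm m) hp0 hp1 (by linarith) hpm0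
    have e : (p m + (pp m + 1) - pm m - D m) - x m = 1 := by linarith
    rw [e] at h; nlinarith
  have h2 : wminus + μ ≤ 0 := by
    have h := key (p m) (pp m) (pm m + 1) hp0 hp1 hpp0 (by linarith)
    have e : (p m + pp m - (pm m + 1) - D m) - x m = -1 := by linarith
    rw [e] at h; nlinarith
  have h5 : ∀ q, 0 ≤ q → q ≤ pbar m → 0 ≤ (c m * p m + b m + μ) * (q - p m) := by
    intro q hq0 hq1
    have h := key q (pp m) (pm m) hq0 hq1 hpp0 hpm0
    have e : (q + pp m - pm m - D m) - x m = q - p m := by linarith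
    rw [e] at h; nlinarith
  -- Generic "p = min" lemma for modes 2 and 3
  have hmode : ∀ w : ℝ, b m < w → w + μ = 0 →
      p m = min (pbar m) ((w - b m) / c m) := by
    intro w hbw' hwμ
    rcases hp1.lt_or_eq with hlt | hEq
    · -- p m < pbar m
      have hκ0 : 0 ≤ c m * p m + b m + μ := by
        have := h5 (pbar m) (hpbar m) le_rfl
        nlinarith
      have hppos : 0 < p m := by
        rcases hp0.lt_or_eq with h | h
        · exact h
        · exfalso; nlinarith
      have hκ0' : c m * p m + b m + μ ≤ 0 := by
        have := h5 0 le_rfl (hpbar m); nlinarith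
      have hpe : p m = (w - b m) / c m := by
        rw [eq_div_iff (ne_of_gt hcm)]; nlinarith
      rw [hpe, min_eq_right]
      rw [← hpe]; exact hlt.le
    · -- p m = pbar m
      have hcpb : c m * pbar m + b m - w ≤ 0 := by
        rcases (hpbar m).lt_or_eq with h0 | h0
        · have hμw : μ = -w := by linarith
          have := h5 0 le_rfl (hpbar m)
          rw [hEq, hμw] at this
          nlinarith
        · nlinarith
      rw [hEq, min_eq_left]
      rw [le_div_iff₀ hcm]; nlinarith
  by_cases hppp : 0 < pp m
  · -- Mode 2
    right; left
    have h3 : wplus + μ ≤ 0 := by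
      have h := key (p m) 0 (pm m) hp0 hp1 le_rfl hpm0
      have e : (p m + 0 - pm m - D m) - x m = -pp m := by linarith
      rw [e] at h; nlinarith
    have hwμ : wplus + μ = 0 := le_antisymm h3 h1
    rw [← hX]
    exact ⟨by rw [hμ] at hwμ; linarith, hmode wplus (by linarith [hbw m]) hwμ⟩
  by_cases hpmp : 0 < pm m
  · -- Mode 3
    right; right; left
    have h4 : 0 ≤ wminus + μ := by
      have h := key (p m) (pp m) 0 hp0 hp1 hpp0 le_rfl
      have e : (p m + pp m - 0 - D m) - x m = pm m := by linarith
      rw [e] at h; nlinarith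
    have hwμ : wminus + μ = 0 := le_antisymm h2 h4
    rw [← hX]
    exact ⟨by rw [hμ] at hwμ; linarith, hmode wminus (hbw m) hwμ⟩
  -- pp m = 0 and pm m = 0
  have hppz : pp m = 0 := le_antisymm (not_lt.mp hppp) hpp0
  have hpmz : pm m = 0 := le_antisymm (not_lt.mp hpmp) hpm0
  have hpxD : p m = x m + D m := by linarith
  rcases hp1.lt_or_eq with hlt | hEq
  · -- Mode 1
    left
    have hκ0 : 0 ≤ c m * p m + b m + μ := by
      have := h5 (pbar m) (hpbar m) le_rfl
      nlinarith
    have hppos : 0 < p m := by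
      rcases hp0.lt_or_eq with h | h
      · exact h
      · exfalso; nlinarith [hbw m]
    have hκ0' : c m * p m + b m + μ ≤ 0 := by
      have := h5 0 le_rfl (hpbar m); nlinarith
    refine ⟨?_, hpxD⟩
    rw [← hX, ← hpxD]
    rw [hμ] at hκ0 hκ0'
    linarith
  · -- Mode 4
    right; right; right
    exact ⟨by linarith, hEq⟩
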